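/- The sequence D_{n,k} = |{π ∈ B_n : exc_A(π) = k}| satisfies the recursion D_{n,k} = (n−k)·D_{n−1,k−1} + (n+1)·D_{n−1,k} + (k+1)·D_{n−1,k+1}. -/

import Mathlib

open Finset Polynomial

/-- The group of colored permutations `G_{r,n} = Z_r ≀ S_n`, realized as bijections of the
colored alphabet `Σ = [n] × {0,…,r-1}` commuting with the color shift. -/
def ColoredPerm (r n : ℕ) [NeZero r] : Type :=
  {π : Equiv.Perm (Fin n × Fin r) //
    ∀ x : Fin n × Fin r, π (x.1, x.2 + 1) = ((π x).1, (π x).2 + 1)}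

/-- The color order on the colored alphabet:
`1^[r-1] < ⋯ < n^[r-1] < ⋯ < 1^[0] < ⋯ < n^[0]` (higher color is smaller). -/
def colorLt {r n : ℕ} (x y : Fin n × Fin r) : Prop :=
  y.2 < x.2 ∨ (x.2 = y.2 ∧ x.1 < y.1)

instance colorLt.dec {r n : ℕ} (x y : Fin n × Fin r) : Decidable (colorLt x y) := by
  unfold colorLt; exact inferInstance

/-- The excedance number `exc` of a colored permutation. -/
noncomputable def cExc {r n : ℕ} [NeZero r] (π : ColoredPerm r n) : ℕ :=
  Nat.card {x : Fin n × Fin r // colorLt x (π.1 x)}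

/-- `exc_A(π) = |{i ∈ [n-1] : π(i) > i}|` (positions are the color-0 letters,
and `i ∈ [n-1]` corresponds to `i.val + 1 < n`). -/
noncomputable def cExcA {r n : ℕ} [NeZero r] (π : ColoredPerm r n) : ℕ :=
  Nat.card {i : Fin n // i.val + 1 < n ∧ colorLt (i, 0) (π.1 (i, 0))}

/-- `csum(π)`: the sum of the colors appearing in the window notation of `π`. -/
def csum {r n : ℕ} [NeZero r] (π : ColoredPerm r n) : ℕ :=
  ∑ i : Fin n, (π.1 (i, 0)).2.val

/-- `D_{n,k}`: the number of signed permutations `π ∈ B_n` with `exc_A(π) = k`.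
The index `k` ranges over `ℤ`, so counts vanish for negative `k`. -/
noncomputable def DB (n : ℕ) (k : ℤ) : ℕ :=
  Nat.card {π : ColoredPerm 2 n // (cExcA π : ℤ) = k}

namespace DBaux

abbrev SP (n : ℕ) : Type := Equiv.Perm (Fin n) × (Fin n → Fin 2)

lemma cp_one {n : ℕ} (π : ColoredPerm 2 n) (i : Fin n) :
    π.1 (i, 1) = ((π.1 (i, 0)).1, (π.1 (i, 0)).2 + 1) := by
  have h := π.2 (i, 0)
  simpa using h

lemma fst_inj {n : ℕ} (π : ColoredPerm 2 n) :
    Function.Injective fun i : Fin n => (π.1 (i, 0)).1 := by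
  intro a b h
  simp only at h
  by_cases hc : (π.1 (a, 0)).2 = (π.1 (b, 0)).2
  · have : π.1 (a, 0) = π.1 (b, 0) := Prod.ext h hc
    have := π.1.injective this
    exact (Prod.ext_iff.mp this).1
  · have hc2 : (π.1 (b, 0)).2 = (π.1 (a, 0)).2 + 1 := by omega
    have : π.1 (b, 0) = π.1 (a, 1) := by
      rw [cp_one]
      exact Prod.ext h.symm hc2
    have := π.1.injective this
    have := (Prod.ext_iff.mp this).2
    simp at this

noncomputable def toSP {n : ℕ} (π : ColoredPerm 2 n) : SP n :=
  (Equiv.ofBijective _ (Finite.injective_iff_bijective.mp (fst_inj π)),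
   fun i => (π.1 (i, 0)).2)

def ofSP {n : ℕ} (σ : SP n) : ColoredPerm 2 n :=
  ⟨Equiv.prodShear σ.1 (fun i => Equiv.addLeft (σ.2 i)), by
    intro x
    simp [Equiv.prodShear, add_assoc]⟩

noncomputable def toSPEquiv (n : ℕ) : ColoredPerm 2 n ≃ SP n where
  toFun := toSP
  invFun := ofSP
  left_inv := by
    intro π
    apply Subtype.ext
    apply Equiv.ext
    rintro ⟨i, c⟩
    fin_cases c
    · simp [ofSP, toSP, Equiv.prodShear]
    · simp [ofSP, toSP, Equiv.prodShear, cp_one]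
  right_inv := by
    rintro ⟨p, s⟩
    apply Prod.ext
    · apply Equiv.ext
      intro i
      simp [ofSP, toSP, Equiv.prodShear]
    · funext i
      simp [ofSP, toSP, Equiv.prodShear]

@[simp] lemma toSPEquiv_fst {n : ℕ} (π : ColoredPerm 2 n) (i : Fin n) :
    ((toSPEquiv n π).1 : Fin n → Fin n) i = (π.1 (i, 0)).1 := rfl

@[simp] lemma toSPEquiv_snd {n : ℕ} (π : ColoredPerm 2 n) (i : Fin n) :
    (toSPEquiv n π).2 i = (π.1 (i, 0)).2 := rfl

def EAs {n : ℕ} (σ : SP n) : ℕ :=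
  (univ.filter fun j : Fin n => σ.2 j = 0 ∧ j < σ.1 j).card

lemma cExcA_toSP {n : ℕ} (π : ColoredPerm 2 n) : cExcA π = EAs (toSPEquiv n π) := by
  rw [cExcA, Nat.card_eq_fintype_card, Fintype.card_subtype, EAs]
  apply Finset.card_bij (fun i _ => i) ?_ (fun a _ b _ h => h) (fun b hb => ⟨b, ?_, rfl⟩)
  · intro i hi
    simp only [mem_filter, mem_univ, true_and] at hi ⊢
    obtain ⟨h1, h2⟩ := hi
    rcases h2 with h | ⟨h2, h3⟩
    · exact absurd h (by simp)
    · exact ⟨by rw [toSPEquiv_snd]; exact h2.symm, by rw [toSPEquiv_fst]; exact h3⟩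
  · simp only [mem_filter, mem_univ, true_and] at hb ⊢
    obtain ⟨h2, h3⟩ := hb
    rw [toSPEquiv_snd] at h2
    rw [toSPEquiv_fst] at h3
    refine ⟨?_, Or.inr ⟨h2.symm, h3⟩⟩
    have h4 : (b : ℕ) < ((π.1 (b,0)).1 : ℕ) := h3
    have h5 : ((π.1 (b,0)).1 : ℕ) < n := (π.1 (b,0)).1.isLt
    omega

lemma DB_sum (n : ℕ) (k : ℤ) :
    (DB n k : ℤ) = ∑ σ : SP n, (if (EAs σ : ℤ) = k then (1:ℤ) else 0) := by
  have e : {π : ColoredPerm 2 n // (cExcA π : ℤ) = k} ≃ {σ : SP n // (EAs σ : ℤ) = k} :=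
    (toSPEquiv n).subtypeEquiv fun π => by rw [cExcA_toSP]
  rw [DB, Nat.card_congr e, Nat.card_eq_fintype_card, Fintype.card_subtype, Finset.sum_boole]

def extF {m : ℕ} (p : Equiv.Perm (Fin m)) : Fin (m+1) → Fin (m+1) :=
  Fin.snoc (fun j => (p j).castSucc) (Fin.last m)

lemma extF_bij {m : ℕ} (p : Equiv.Perm (Fin m)) : Function.Bijective (extF p) := by
  refine Finite.injective_iff_bijective.mp ?_
  intro a b h
  rcases Fin.eq_castSucc_or_eq_last a with ⟨a', rfl⟩ | rfl <;>
    rcases Fin.eq_castSucc_or_eq_last b with ⟨b', rfl⟩ | rfl <;>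
      simp [extF, Fin.snoc_castSucc, Fin.snoc_last] at h ⊢
  · exact h
  · exact absurd h.symm (ne_of_lt (Fin.castSucc_lt_last _))

noncomputable def insF {m : ℕ} (x : SP m × (Fin (m+1) × Fin 2)) : SP (m+1) :=
  ((Equiv.swap x.2.1 (Fin.last m)).trans (Equiv.ofBijective (extF x.1.1) (extF_bij x.1.1)),
   Fin.snoc x.1.2 x.2.2 ∘ (Equiv.swap x.2.1 (Fin.last m)))

lemma insF_fst_apply {m : ℕ} (σ : SP m) (i : Fin (m+1)) (ε : Fin 2) (j : Fin (m+1)) :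
    (insF (σ, (i, ε))).1 j = extF σ.1 (Equiv.swap i (Fin.last m) j) := rfl

lemma insF_snd_apply {m : ℕ} (σ : SP m) (i : Fin (m+1)) (ε : Fin 2) (j : Fin (m+1)) :
    (insF (σ, (i, ε))).2 j = (Fin.snoc σ.2 ε : Fin (m+1) → Fin 2) (Equiv.swap i (Fin.last m) j) := rfl

lemma insF_inj {m : ℕ} : Function.Injective (insF (m := m)) := by
  intro x y h
  obtain ⟨σ, i, ε⟩ := x
  obtain ⟨σ', i', ε'⟩ := y
  have hq : (insF (σ,(i,ε))).1 = (insF (σ',(i',ε'))).1 := congrArg Prod.fst h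
  have ht : (insF (σ,(i,ε))).2 = (insF (σ',(i',ε'))).2 := congrArg Prod.snd h
  have hqi : ∀ (τ : SP m) (a : Fin (m+1)) (e : Fin 2), (insF (τ, (a, e))).1 a = Fin.last m := by
    intro τ a e
    rw [insF_fst_apply, Equiv.swap_apply_left, extF, Fin.snoc_last]
  have hii : i = i' := by
    have h1 := hqi σ i ε
    have h2 := hqi σ' i' ε'
    rw [hq] at h1
    exact (insF (σ', (i', ε'))).1.injective (h1.trans h2.symm)
  subst hii
  have hp : σ.1 = σ'.1 := by
    apply Equiv.ext
    intro j
    have h1 := DFunLike.congr_fun hq (Equiv.swap i (Fin.last m) j.castSucc)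
    simp only [insF_fst_apply, Equiv.swap_apply_self, extF, Fin.snoc_castSucc] at h1
    exact Fin.castSucc_injective _ h1
  have hs : σ.2 = σ'.2 := by
    funext j
    have h1 := congrFun ht (Equiv.swap i (Fin.last m) j.castSucc)
    simp only [insF_snd_apply, Equiv.swap_apply_self, Fin.snoc_castSucc] at h1
    exact h1
  have he : ε = ε' := by
    have h1 := congrFun ht i
    simp only [insF_snd_apply, Equiv.swap_apply_left, Fin.snoc_last] at h1
    exact h1
  simp [Prod.ext_iff, hp, hs, he]

noncomputable def insEquiv (m : ℕ) : SP m × (Fin (m+1) × Fin 2) ≃ SP (m+1) :=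
  Equiv.ofBijective insF ((Fintype.bijective_iff_injective_and_card _).mpr
    ⟨insF_inj, by
      simp [Fintype.card_prod, Fintype.card_perm, Fintype.card_fun, Fintype.card_fin,
        Nat.factorial_succ, pow_succ]
      ring⟩)

@[simp] lemma insEquiv_apply {m : ℕ} (x : SP m × (Fin (m+1) × Fin 2)) :
    insEquiv m x = insF x := rfl

lemma EAs_sum {n : ℕ} (σ : SP n) :
    (EAs σ : ℤ) = ∑ j : Fin n, (if σ.2 j = 0 ∧ j < σ.1 j then (1:ℤ) else 0) := by
  rw [EAs, Finset.sum_boole]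

lemma EAs_insF_last {m : ℕ} (σ : SP m) (ε : Fin 2) :
    EAs (insF (σ, (Fin.last m, ε))) = EAs σ := by
  have h : (EAs (insF (σ, (Fin.last m, ε))) : ℤ) = (EAs σ : ℤ) := by
    rw [EAs_sum, EAs_sum, Fin.sum_univ_castSucc]
    have hlast : (if (insF (σ, (Fin.last m, ε))).2 (Fin.last m) = 0 ∧
        Fin.last m < (insF (σ, (Fin.last m, ε))).1 (Fin.last m) then (1:ℤ) else 0) = 0 := by
      rw [insF_fst_apply]
      simp [Equiv.swap_self, extF, Fin.snoc_last]
    rw [hlast, add_zero]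
    apply Finset.sum_congr rfl
    intro j _
    rw [insF_fst_apply, insF_snd_apply]
    simp [Equiv.swap_self, extF, Fin.snoc_castSucc, Fin.castSucc_lt_castSucc_iff]
  exact_mod_cast h

lemma EAs_insF_cast {m : ℕ} (σ : SP m) (i' : Fin m) (ε : Fin 2) :
    (EAs (insF (σ, (i'.castSucc, ε))) : ℤ) =
      (EAs σ : ℤ) + (if ε = 0 then 1 else 0) - (if σ.2 i' = 0 ∧ i' < σ.1 i' then 1 else 0) := by
  rw [EAs_sum, EAs_sum, Fin.sum_univ_castSucc]
  have hne : i'.castSucc ≠ Fin.last m := ne_of_lt (Fin.castSucc_lt_last _)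
  have hlast : (if (insF (σ, (i'.castSucc, ε))).2 (Fin.last m) = 0 ∧
      Fin.last m < (insF (σ, (i'.castSucc, ε))).1 (Fin.last m) then (1:ℤ) else 0) = 0 := by
    rw [insF_fst_apply, Equiv.swap_apply_right]
    have : ¬ (Fin.last m < extF σ.1 i'.castSucc) := by
      simp only [extF, Fin.snoc_castSucc]
      exact lt_asymm (Fin.castSucc_lt_last _)
    simp [this]
  rw [hlast, add_zero]
  have key : ∀ j : Fin m,
      (if (insF (σ, (i'.castSucc, ε))).2 j.castSucc = 0 ∧
          j.castSucc < (insF (σ, (i'.castSucc, ε))).1 j.castSucc then (1:ℤ) else 0) =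
        (if σ.2 j = 0 ∧ j < σ.1 j then (1:ℤ) else 0) +
          (if j = i' then ((if ε = 0 then (1:ℤ) else 0) -
            (if σ.2 i' = 0 ∧ i' < σ.1 i' then (1:ℤ) else 0)) else 0) := by
    intro j
    by_cases hj : j = i'
    · subst hj
      rw [insF_fst_apply, insF_snd_apply, Equiv.swap_apply_left]
      simp only [extF, Fin.snoc_last, if_pos rfl]
      have hlt : j.castSucc < Fin.last m := Fin.castSucc_lt_last _
      simp [hlt]
      all_goals split_ifs <;> ring
    · have hne2 : j.castSucc ≠ i'.castSucc := fun h => hj (Fin.castSucc_injective _ h)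
      rw [insF_fst_apply, insF_snd_apply,
        Equiv.swap_apply_of_ne_of_ne hne2 (ne_of_lt (Fin.castSucc_lt_last _))]
      simp [extF, Fin.snoc_castSucc, Fin.castSucc_lt_castSucc_iff, hj]
  rw [Finset.sum_congr rfl (fun j _ => key j), Finset.sum_add_distrib,
    Finset.sum_ite_eq' univ i']
  simp
  all_goals ring

lemma g_eval {m : ℕ} (σ : SP m) (k : ℤ) :
    ∑ c : Fin (m+1) × Fin 2, (if (EAs (insF (σ, c)) : ℤ) = k then (1:ℤ) else 0) =
      (if (EAs σ : ℤ) = k then ((m:ℤ)+2) else 0) +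
      (if (EAs σ : ℤ) = k - 1 then ((m:ℤ)+1-k) else 0) +
      (if (EAs σ : ℤ) = k + 1 then (k+1) else 0) := by
  set E : ℤ := (EAs σ : ℤ) with hE
  set A : ℤ := (if E = k then 1 else 0) + (if E - 1 = k then 1 else 0) with hA
  set B : ℤ := (if E + 1 = k then 1 else 0) + (if E = k then 1 else 0) with hB
  rw [Fintype.sum_prod_type, Fin.sum_univ_castSucc]
  have hlast : ∑ ε : Fin 2, (if (EAs (insF (σ, (Fin.last m, ε))) : ℤ) = k then (1:ℤ) else 0) =
      2 * (if E = k then (1:ℤ) else 0) := by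
    rw [Fin.sum_univ_two, EAs_insF_last, EAs_insF_last]
    ring
  have hcast : ∀ i' : Fin m,
      ∑ ε : Fin 2, (if (EAs (insF (σ, (i'.castSucc, ε))) : ℤ) = k then (1:ℤ) else 0) =
        B + (if σ.2 i' = 0 ∧ i' < σ.1 i' then A - B else 0) := by
    intro i'
    rw [Fin.sum_univ_two]
    rw [show ((if (EAs (insF (σ, (i'.castSucc, (0 : Fin 2)))) : ℤ) = k then (1:ℤ) else 0)) =
        (if E + 1 - (if σ.2 i' = 0 ∧ i' < σ.1 i' then (1:ℤ) else 0) = k then (1:ℤ) else 0) by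
      rw [EAs_insF_cast]; simp; rfl]
    rw [show ((if (EAs (insF (σ, (i'.castSucc, (1 : Fin 2)))) : ℤ) = k then (1:ℤ) else 0)) =
        (if E - (if σ.2 i' = 0 ∧ i' < σ.1 i' then (1:ℤ) else 0) = k then (1:ℤ) else 0) by
      rw [EAs_insF_cast]; norm_num; rfl]
    by_cases hexc : σ.2 i' = 0 ∧ i' < σ.1 i'
    · simp only [if_pos hexc, hA, hB]
      have h1 : E + 1 - 1 = E := by ring
      rw [h1]
      ring
    · simp only [if_neg hexc, hA, hB]
      have h1 : E + 1 - 0 = E + 1 := by ring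
      have h2 : E - 0 = E := by ring
      rw [h1, h2]
      ring
  rw [hlast, Finset.sum_congr rfl (fun i' _ => hcast i'), Finset.sum_add_distrib,
    Finset.sum_const, Finset.card_univ, Fintype.card_fin, nsmul_eq_mul]
  have h3 : ∑ i' : Fin m, (if σ.2 i' = 0 ∧ i' < σ.1 i' then A - B else 0) = (A - B) * E := by
    have : ∀ i' : Fin m, (if σ.2 i' = 0 ∧ i' < σ.1 i' then A - B else 0) =
        (A - B) * (if σ.2 i' = 0 ∧ i' < σ.1 i' then (1:ℤ) else 0) := by
      intro i'; split_ifs <;> ring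
    rw [Finset.sum_congr rfl (fun i' _ => this i'), ← Finset.mul_sum, Finset.sum_boole, hE, EAs]
  rw [h3, hA, hB]
  have hk1 : (if E - 1 = k then (1:ℤ) else 0) = (if E = k + 1 then (1:ℤ) else 0) := by
    split_ifs with u v v <;> omega
  have hk2 : (if E + 1 = k then (1:ℤ) else 0) = (if E = k - 1 then (1:ℤ) else 0) := by
    split_ifs with u v v <;> omega
  rw [hk1, hk2]
  split_ifs with u v w <;> first | (subst u) | skip
  all_goals (try subst v)
  all_goals (try subst w)
  all_goals ring_nf
  all_goals omega

end DBaux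

open DBaux in
/-- The recursion `D_{n,k} = (n−k)·D_{n−1,k−1} + (n+1)·D_{n−1,k} + (k+1)·D_{n−1,k+1}`. -/
theorem DB_recursion (n : ℕ) (hn : 1 ≤ n) (k : ℤ) :
    (DB n k : ℤ) =
      ((n : ℤ) - k) * DB (n - 1) (k - 1) + ((n : ℤ) + 1) * DB (n - 1) k +
        (k + 1) * DB (n - 1) (k + 1) := by
  obtain ⟨m, rfl⟩ : ∃ m, n = m + 1 := ⟨n - 1, (Nat.succ_pred_eq_of_pos hn).symm⟩
  have hsub : m + 1 - 1 = m := by omega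
  rw [hsub, DB_sum]
  rw [← Equiv.sum_comp (insEquiv m)
    (fun σ => if (EAs σ : ℤ) = k then (1:ℤ) else 0)]
  show (∑ x : SP m × (Fin (m+1) × Fin 2), if (EAs (insF x) : ℤ) = k then (1:ℤ) else 0) = _
  rw [Fintype.sum_prod_type]
  rw [Finset.sum_congr rfl (fun σ _ => g_eval σ k)]
  rw [Finset.sum_add_distrib, Finset.sum_add_distrib]
  have hterm : ∀ (j c : ℤ), ∑ σ : SP m, (if (EAs σ : ℤ) = j then c else 0) =
      c * (DB m j : ℤ) := by
    intro j c
    rw [DB_sum, Finset.mul_sum]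
    apply Finset.sum_congr rfl
    intro σ _
    split_ifs <;> ring
  rw [hterm k ((m:ℤ)+2), hterm (k-1) ((m:ℤ)+1-k), hterm (k+1) (k+1)]
  push_cast
  ring
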